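/- Let Z be a standard Borel space, κ a Markov kernel from Z to Z, η a κ-invariant probability measure, Q the induced Markov operator on L¹(Z,η), and ℙ the stationary two-sided trajectory measure on Z^ℤ. Assume: (i) for every n ≥ 1, every ψ ∈ L²(Z,η) with Q^n ψ = ψ is a.e. constant; and (ii) the tail σ-algebra F_tail contains only finitely many sets up to ℙ-null sets (i.e. every infinite family of sets in F_tail contains two sets differing by a ℙ-null set). Then F_tail is trivial: every set in F_tail has ℙ-measure 0 or 1. -/

import Mathlib

open MeasureTheory Filter ENNReal Topology ProbabilityTheory

noncomputable section
set_option linter.unusedSectionVars false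
set_option linter.unusedVariables false

/-- `chainProb κ [A₁,…,Aₙ] z = ∫_{A₁} κ(z,dz₁) ∫_{A₂} κ(z₁,dz₂) ⋯ κ(z_{n−1}, Aₙ)`. -/
def chainProb {Z : Type*} [MeasurableSpace Z] (κ : Kernel Z Z) :
    List (Set Z) → Z → ℝ≥0∞
  | [], _ => 1
  | A :: rest, z => ∫⁻ y in A, chainProb κ rest y ∂(κ z)

/-- `P` is the stationary two-sided trajectory measure on `Z^ℤ` of the Markov kernel `κ` with
invariant initial distribution `η`: its finite-dimensional distributions are
`ℙ(z_m ∈ A_m, …, z_n ∈ A_n) = ∫_{A_m} η(dz_m) ∫_{A_{m+1}} κ(z_m,dz_{m+1}) ⋯ ∫_{A_n} κ(z_{n−1},dz_n)`. -/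
def IsTrajMeasure {Z : Type*} [MeasurableSpace Z] (η : Measure Z) (κ : Kernel Z Z)
    (P : Measure (ℤ → Z)) : Prop :=
  ∀ (m : ℤ) (A₀ : Set Z) (L : List (Set Z)), MeasurableSet A₀ →
    (∀ A ∈ L, MeasurableSet A) →
    P {ω | ω m ∈ A₀ ∧ ∀ i : Fin L.length, ω (m + 1 + ((i : ℕ) : ℤ)) ∈ L.get i} =
      ∫⁻ z in A₀, chainProb κ L z ∂η

/-- The σ-algebra `σ(z_m : m ≥ n)` on `Z^ℤ` generated by the coordinates with index `≥ n`. -/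
def coordFromSA (Z : Type*) [MeasurableSpace Z] (n : ℤ) : MeasurableSpace (ℤ → Z) :=
  ⨆ m : ℤ, ⨆ _ : n ≤ m, MeasurableSpace.comap (fun ω : ℤ → Z => ω m) inferInstance

/-- The tail σ-algebra `F_tail = ⋂_{n ≥ 0} σ(z_m : m ≥ n)` on `Z^ℤ`. -/
def tailSA (Z : Type*) [MeasurableSpace Z] : MeasurableSpace (ℤ → Z) :=
  ⨅ n : ℕ, coordFromSA Z (n : ℤ)

/-- The constant function `1` as an element of `L¹(Z,η)`. -/
def oneL1 {Z : Type*} [MeasurableSpace Z] (η : Measure Z) [IsFiniteMeasure η] : Lp ℝ 1 η :=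
  MemLp.toLp (fun _ => (1 : ℝ)) (memLp_const 1)

/-- A measure-preserving Markov operator on `L¹(Z,η)`. -/
def IsMarkovOp {Z : Type*} [MeasurableSpace Z] (η : Measure Z) [IsFiniteMeasure η]
    (Q : Lp ℝ 1 η →ₗ[ℝ] Lp ℝ 1 η) : Prop :=
  (∀ φ : Lp ℝ 1 η, 0 ≤ φ → 0 ≤ Q φ) ∧
  Q (oneL1 η) = oneL1 η ∧
  ∀ φ : Lp ℝ 1 η, ∫ z, (Q φ : Z → ℝ) z ∂η = ∫ z, (φ : Z → ℝ) z ∂η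

/-- `Qs` agrees on `L²(Z,η)` with the adjoint of the restriction of `Q` to `L²`. -/
def MarkovAdjoint {Z : Type*} [MeasurableSpace Z] (η : Measure Z) [IsFiniteMeasure η]
    (Q Qs : Lp ℝ 1 η →ₗ[ℝ] Lp ℝ 1 η) : Prop :=
  ∀ φ ψ : Lp ℝ 1 η, MemLp (φ : Z → ℝ) 2 η → MemLp (ψ : Z → ℝ) 2 η →
    ∫ z, (Q φ : Z → ℝ) z * (ψ : Z → ℝ) z ∂η
      = ∫ z, (φ : Z → ℝ) z * (Qs ψ : Z → ℝ) z ∂η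

namespace St6

variable {Z : Type*} [MeasurableSpace Z]

/-- Iterated kernel integral along sets `f 1, …, f N`, ending with function `h`. -/
def WH (κ : Kernel Z Z) : ℕ → (ℕ → Set Z) → (Z → ℝ≥0∞) → Z → ℝ≥0∞
  | 0, _, h => h
  | N + 1, f, h => fun z => ∫⁻ y in f 1, WH κ N (fun i => f (i + 1)) h y ∂(κ z)

/-- The one-step operator on `ℝ≥0∞`-valued functions. -/
def Rop (κ : Kernel Z Z) (g : Z → ℝ≥0∞) : Z → ℝ≥0∞ := fun z => ∫⁻ y, g y ∂(κ z)

/-- Cylinder set at positions `m, m+1, …, m+N`. -/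
def cylFun (m : ℤ) (N : ℕ) (f : ℕ → Set Z) : Set (ℤ → Z) :=
  {ω | ∀ i : ℕ, i ≤ N → ω (m + i) ∈ f i}

lemma mem_cylFun {m : ℤ} {N : ℕ} {f : ℕ → Set Z} {ω : ℤ → Z} :
    ω ∈ cylFun m N f ↔ ∀ i : ℕ, i ≤ N → ω (m + i) ∈ f i := Iff.rfl

variable {κ : Kernel Z Z} [IsMarkovKernel κ]


lemma setLIntegral_le_one {g : Z → ℝ≥0∞} (hg : ∀ z, g z ≤ 1) (s : Set Z) (μ : Measure Z)
    [IsProbabilityMeasure μ] : ∫⁻ y in s, g y ∂μ ≤ 1 := by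
  calc ∫⁻ y in s, g y ∂μ ≤ ∫⁻ _ in s, 1 ∂μ := lintegral_mono hg
    _ = μ s := setLIntegral_one s
    _ ≤ 1 := prob_le_one

lemma measurable_WH : ∀ (N : ℕ) (f : ℕ → Set Z) (h : Z → ℝ≥0∞),
    (∀ i, MeasurableSet (f i)) → Measurable h → Measurable (WH κ N f h)
  | 0, f, h, _, hh => hh
  | N + 1, f, h, hf, hh =>
    (measurable_WH N (fun i => f (i + 1)) h (fun i => hf _) hh).setLIntegral_kernel (hf 1)

lemma WH_le_one : ∀ (N : ℕ) (f : ℕ → Set Z) (h : Z → ℝ≥0∞),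
    (∀ z, h z ≤ 1) → ∀ z, WH κ N f h z ≤ 1
  | 0, f, h, hh, z => hh z
  | N + 1, f, h, hh, z =>
    setLIntegral_le_one (fun y => WH_le_one N _ h hh y) _ _

lemma WH_mono : ∀ (N : ℕ) (f : ℕ → Set Z) (g₁ g₂ : Z → ℝ≥0∞),
    (∀ z, g₁ z ≤ g₂ z) → ∀ z, WH κ N f g₁ z ≤ WH κ N f g₂ z
  | 0, f, g₁, g₂, hle, z => hle z
  | N + 1, f, g₁, g₂, hle, z =>
    lintegral_mono fun y => WH_mono N _ g₁ g₂ hle y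

lemma WH_congr : ∀ (N : ℕ) (f f' : ℕ → Set Z) (h : Z → ℝ≥0∞),
    (∀ i, 1 ≤ i → f i = f' i) → WH κ N f h = WH κ N f' h
  | 0, f, f', h, _ => rfl
  | N + 1, f, f', h, hff' => by
    show (fun z => ∫⁻ y in f 1, WH κ N (fun i => f (i + 1)) h y ∂(κ z)) = _
    rw [hff' 1 le_rfl,
      WH_congr N (fun i => f (i + 1)) (fun i => f' (i + 1)) h fun i _ => hff' (i + 1) (by omega)]
    rfl

lemma WH_const_mul : ∀ (N : ℕ) (f : ℕ → Set Z) (g : Z → ℝ≥0∞), (∀ i, MeasurableSet (f i)) →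
    Measurable g → ∀ (c : ℝ≥0∞), WH κ N f (fun z => c * g z) = fun z => c * WH κ N f g z
  | 0, f, g, _, _, c => rfl
  | N + 1, f, g, hf, hg, c => by
    show (fun z => ∫⁻ y in f 1, WH κ N (fun i => f (i + 1)) (fun z => c * g z) y ∂(κ z)) = _
    rw [WH_const_mul N _ g (fun i => hf _) hg c]
    funext z
    exact lintegral_const_mul c (measurable_WH N _ g (fun i => hf _) hg)

lemma WH_sub_one : ∀ (N : ℕ) (f : ℕ → Set Z) (g : Z → ℝ≥0∞), (∀ i, MeasurableSet (f i)) →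
    Measurable g → (∀ z, g z ≤ 1) →
    WH κ N f (fun z => 1 - g z) = fun z => WH κ N f (fun _ => 1) z - WH κ N f g z
  | 0, f, g, _, _, _ => rfl
  | N + 1, f, g, hf, hg, hg1 => by
    show (fun z => ∫⁻ y in f 1, WH κ N (fun i => f (i + 1)) (fun z => 1 - g z) y ∂(κ z)) = _
    rw [WH_sub_one N _ g (fun i => hf _) hg hg1]
    funext z
    exact lintegral_sub (measurable_WH N _ g (fun i => hf _) hg)
      (ne_top_of_le_ne_top one_ne_top
        (setLIntegral_le_one (fun y => WH_le_one N _ g hg1 y) _ _))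
      (ae_of_all _ fun y => WH_mono N _ g (fun _ => 1) (fun z => hg1 z) y)

lemma WH_tsum : ∀ (N : ℕ) (f : ℕ → Set Z) (g : ℕ → Z → ℝ≥0∞), (∀ i, MeasurableSet (f i)) →
    (∀ n, Measurable (g n)) →
    WH κ N f (fun z => ∑' n, g n z) = fun z => ∑' n, WH κ N f (g n) z
  | 0, f, g, _, _ => rfl
  | N + 1, f, g, hf, hg => by
    show (fun z => ∫⁻ y in f 1, WH κ N (fun i => f (i + 1)) (fun z => ∑' n, g n z) y ∂(κ z)) = _
    rw [WH_tsum N _ g (fun i => hf _) hg]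
    funext z
    exact lintegral_tsum fun n => (measurable_WH N _ (g n) (fun i => hf _) (hg n)).aemeasurable

lemma measurable_Rop {g : Z → ℝ≥0∞} (hg : Measurable g) : Measurable (Rop κ g) :=
  hg.lintegral_kernel

lemma Rop_le_one {g : Z → ℝ≥0∞} (hg : ∀ z, g z ≤ 1) : ∀ z, Rop κ g z ≤ 1 := fun z => by
  calc ∫⁻ y, g y ∂(κ z) ≤ ∫⁻ _, 1 ∂(κ z) := lintegral_mono hg
    _ = 1 := by rw [lintegral_one, measure_univ]

lemma Rop_const (c : ℝ≥0∞) : Rop κ (fun _ => c) = fun _ => c := by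
  funext z; simp [Rop]

end St6

namespace St6

variable {Z : Type*} [MeasurableSpace Z] {κ : Kernel Z Z} [IsMarkovKernel κ]

lemma chain_eq_WH : ∀ (N : ℕ) (f : ℕ → Set Z),
    chainProb κ (List.ofFn fun i : Fin N => f ((i : ℕ) + 1)) = WH κ N f (fun _ => 1)
  | 0, f => by
    rw [List.ofFn_zero]; rfl
  | N + 1, f => by
    rw [List.ofFn_succ]
    have : (fun i : Fin N => f ((i.succ : ℕ) + 1)) = fun i : Fin N => (fun j => f (j + 1)) ((i : ℕ) + 1) := by
      funext i; simp [Fin.val_succ]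
    show chainProb κ (f 1 :: List.ofFn fun i : Fin N => f ((i.succ : ℕ) + 1)) = _
    rw [this]
    funext z
    show ∫⁻ y in f 1, chainProb κ _ y ∂(κ z) = WH κ (N + 1) f (fun _ => 1) z
    rw [chain_eq_WH N (fun j => f (j + 1))]
    rfl

lemma cylFun_eq_trajSet (m : ℤ) (N : ℕ) (f : ℕ → Set Z) :
    cylFun m N f = {ω : ℤ → Z | ω m ∈ f 0 ∧
      ∀ i : Fin (List.ofFn fun i : Fin N => f ((i : ℕ) + 1)).length,
        ω (m + 1 + ((i : ℕ) : ℤ)) ∈ (List.ofFn fun i : Fin N => f ((i : ℕ) + 1)).get i} := by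
  ext ω
  simp only [mem_cylFun, Set.mem_setOf_eq, List.get_ofFn, List.length_ofFn]
  constructor
  · intro h
    refine ⟨by simpa using h 0 (Nat.zero_le _), fun i => ?_⟩
    have hiN : (i : ℕ) < N := by simpa using i.isLt
    have := h ((i : ℕ) + 1) (by omega)
    have harith : m + (((i : ℕ) + 1 : ℕ) : ℤ) = m + 1 + ((i : ℕ) : ℤ) := by push_cast; ring
    rw [harith] at this
    simpa using this
  · rintro ⟨h0, hs⟩ i hi
    match i, hi with
    | 0, _ => simpa using h0
    | (j + 1), hj =>
      have hlt : j < N := by omega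
      have := hs ⟨j, by simpa using hlt⟩
      simp only [Fin.cast] at this
      have harith : m + ((j + 1 : ℕ) : ℤ) = m + 1 + ((j : ℕ) : ℤ) := by push_cast; ring
      rw [harith]
      simpa using this

variable {η : Measure Z} [IsProbabilityMeasure η] {P : Measure (ℤ → Z)}

lemma P_cylFun (hP : IsTrajMeasure η κ P) (m : ℤ) (N : ℕ) (f : ℕ → Set Z)
    (hf : ∀ i, MeasurableSet (f i)) :
    P (cylFun m N f) = ∫⁻ z in f 0, WH κ N f (fun _ => 1) z ∂η := by
  rw [cylFun_eq_trajSet m N f, hP m (f 0) _ (hf 0) (by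
    intro A hA
    rw [List.mem_ofFn] at hA
    obtain ⟨i, rfl⟩ := hA
    exact hf _), chain_eq_WH N f]

lemma measurableSet_cylFun (m : ℤ) (N : ℕ) {f : ℕ → Set Z} (hf : ∀ i, MeasurableSet (f i)) :
    MeasurableSet (cylFun m N f) := by
  have : cylFun m N f = ⋂ (i : ℕ) (_ : i ≤ N), (fun ω : ℤ → Z => ω (m + i)) ⁻¹' f i := by
    ext ω; simp [mem_cylFun]
  rw [this]
  exact MeasurableSet.iInter fun i => MeasurableSet.iInter fun _ =>
    (measurable_pi_apply _) (hf i)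

/-- cylinders with arbitrary base -/
def cylSets (Z : Type*) [MeasurableSpace Z] : Set (Set (ℤ → Z)) :=
  {s | ∃ (m : ℤ) (N : ℕ) (f : ℕ → Set Z), (∀ i, MeasurableSet (f i)) ∧ s = cylFun m N f}

/-- cylinders based at `a` -/
def cylSetsFrom (Z : Type*) [MeasurableSpace Z] (a : ℤ) : Set (Set (ℤ → Z)) :=
  {s | ∃ (N : ℕ) (f : ℕ → Set Z), (∀ i, MeasurableSet (f i)) ∧ s = cylFun a N f}

lemma cylFun_rebase (m : ℤ) (N : ℕ) (f : ℕ → Set Z) (d : ℕ) :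
    cylFun m N f = cylFun (m - d) (N + d)
      (fun i => if h : d ≤ i then f (i - d) else Set.univ) := by
  ext ω
  simp only [mem_cylFun]
  constructor
  · intro h i hi
    by_cases hd : d ≤ i
    · rw [dif_pos hd]
      have := h (i - d) (by omega)
      have harith : m + ((i - d : ℕ) : ℤ) = m - d + (i : ℕ) := by omega
      rwa [harith] at this
    · rw [dif_neg hd]; trivial
  · intro h i hi
    have := h (i + d) (by omega)
    rw [dif_pos (by omega)] at this
    have harith : m - d + ((i + d : ℕ) : ℤ) = m + (i : ℕ) := by push_cast; ring
    rw [harith] at this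
    simpa using this

lemma inter_cylFun_same_base (a : ℤ) (N₁ N₂ : ℕ) (f₁ f₂ : ℕ → Set Z) :
    cylFun a N₁ f₁ ∩ cylFun a N₂ f₂ = cylFun a (max N₁ N₂)
      (fun i => (if i ≤ N₁ then f₁ i else Set.univ) ∩ (if i ≤ N₂ then f₂ i else Set.univ)) := by
  ext ω
  simp only [Set.mem_inter_iff, mem_cylFun, Set.mem_inter_iff]
  constructor
  · intro ⟨h1, h2⟩ i hi
    constructor
    · by_cases hc : i ≤ N₁
      · rw [if_pos hc]; exact h1 i hc
      · rw [if_neg hc]; trivial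
    · by_cases hc : i ≤ N₂
      · rw [if_pos hc]; exact h2 i hc
      · rw [if_neg hc]; trivial
  · intro h
    constructor
    · intro i hi
      have := (h i (by omega)).1
      rwa [if_pos hi] at this
    · intro i hi
      have := (h i (by omega)).2
      rwa [if_pos hi] at this

lemma isPiSystem_cylSetsFrom (a : ℤ) : IsPiSystem (cylSetsFrom Z a) := by
  rintro s ⟨N₁, f₁, hf₁, rfl⟩ t ⟨N₂, f₂, hf₂, rfl⟩ -
  refine ⟨max N₁ N₂, _, fun i => ?_, inter_cylFun_same_base a N₁ N₂ f₁ f₂⟩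
  exact MeasurableSet.inter
    (by by_cases hc : i ≤ N₁ <;> simp [hc, hf₁ i])
    (by by_cases hc : i ≤ N₂ <;> simp [hc, hf₂ i])

lemma isPiSystem_cylSets : IsPiSystem (cylSets Z) := by
  rintro s ⟨m₁, N₁, f₁, hf₁, rfl⟩ t ⟨m₂, N₂, f₂, hf₂, rfl⟩ -
  set a := min m₁ m₂ with ha
  have h1 : cylFun m₁ N₁ f₁ = cylFun a (N₁ + (m₁ - a).toNat)
      (fun i => if h : (m₁ - a).toNat ≤ i then f₁ (i - (m₁ - a).toNat) else Set.univ) := by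
    have := cylFun_rebase m₁ N₁ f₁ (m₁ - a).toNat
    rwa [show (m₁ - ((m₁ - a).toNat : ℤ)) = a by omega] at this
  have h2 : cylFun m₂ N₂ f₂ = cylFun a (N₂ + (m₂ - a).toNat)
      (fun i => if h : (m₂ - a).toNat ≤ i then f₂ (i - (m₂ - a).toNat) else Set.univ) := by
    have := cylFun_rebase m₂ N₂ f₂ (m₂ - a).toNat
    rwa [show (m₂ - ((m₂ - a).toNat : ℤ)) = a by omega] at this
  rw [h1, h2, inter_cylFun_same_base]
  refine ⟨a, _, _, fun i => ?_, rfl⟩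
  refine MeasurableSet.inter ?_ ?_
  · by_cases hc : i ≤ N₁ + (m₁ - a).toNat
    · rw [if_pos hc]
      by_cases hd : (m₁ - a).toNat ≤ i
      · rw [dif_pos hd]; exact hf₁ _
      · rw [dif_neg hd]; exact MeasurableSet.univ
    · rw [if_neg hc]; exact MeasurableSet.univ
  · by_cases hc : i ≤ N₂ + (m₂ - a).toNat
    · rw [if_pos hc]
      by_cases hd : (m₂ - a).toNat ≤ i
      · rw [dif_pos hd]; exact hf₂ _
      · rw [dif_neg hd]; exact MeasurableSet.univ
    · rw [if_neg hc]; exact MeasurableSet.univ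

lemma eval_preimage_eq_cylFun (m : ℤ) (B : Set Z) :
    (fun ω : ℤ → Z => ω m) ⁻¹' B = cylFun m 0 (fun _ => B) := by
  ext ω
  simp only [Set.mem_preimage, mem_cylFun]
  constructor
  · intro h i hi
    interval_cases i
    simpa using h
  · intro h
    simpa using h 0 le_rfl

lemma eval_preimage_eq_cylFun' (a m : ℤ) (ham : a ≤ m) (B : Set Z) :
    (fun ω : ℤ → Z => ω m) ⁻¹' B =
      cylFun a (m - a).toNat (fun i => if i = (m - a).toNat then B else Set.univ) := by
  ext ω
  simp only [Set.mem_preimage, mem_cylFun]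
  constructor
  · intro h i hi
    by_cases hc : i = (m - a).toNat
    · rw [if_pos hc, hc, show a + (((m - a).toNat : ℕ) : ℤ) = m by omega]; exact h
    · rw [if_neg hc]; trivial
  · intro h
    have := h (m - a).toNat le_rfl
    rw [if_pos rfl, show a + (((m - a).toNat : ℕ) : ℤ) = m by omega] at this
    exact this

lemma generateFrom_cylSets :
    (inferInstance : MeasurableSpace (ℤ → Z)) = MeasurableSpace.generateFrom (cylSets Z) := by
  refine le_antisymm ?_ ?_
  · rw [show (inferInstance : MeasurableSpace (ℤ → Z)) = MeasurableSpace.pi from rfl]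
    refine iSup_le fun m => ?_
    rw [MeasurableSpace.comap_le_iff_le_map]
    intro s hs
    show MeasurableSet[MeasurableSpace.generateFrom (cylSets Z)] ((fun ω : ℤ → Z => ω m) ⁻¹' s)
    rw [eval_preimage_eq_cylFun m s]
    exact MeasurableSpace.measurableSet_generateFrom ⟨m, 0, _, fun _ => hs, rfl⟩
  · refine MeasurableSpace.generateFrom_le ?_
    rintro s ⟨m, N, f, hf, rfl⟩
    exact measurableSet_cylFun m N hf

lemma generateFrom_cylSetsFrom (a : ℤ) :
    coordFromSA Z a = MeasurableSpace.generateFrom (cylSetsFrom Z a) := by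
  refine le_antisymm ?_ ?_
  · refine iSup_le fun m => iSup_le fun ham => ?_
    rw [MeasurableSpace.comap_le_iff_le_map]
    intro s hs
    show MeasurableSet[MeasurableSpace.generateFrom (cylSetsFrom Z a)]
      ((fun ω : ℤ → Z => ω m) ⁻¹' s)
    rw [eval_preimage_eq_cylFun' a m ham s]
    refine MeasurableSpace.measurableSet_generateFrom ⟨_, _, fun i => ?_, rfl⟩
    by_cases hc : i = (m - a).toNat <;> simp [hc, hs]
  · refine MeasurableSpace.generateFrom_le ?_
    rintro s ⟨N, f, hf, rfl⟩
    have : cylFun a N f = ⋂ (i : ℕ) (_ : i ≤ N), (fun ω : ℤ → Z => ω (a + i)) ⁻¹' f i := by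
      ext ω; simp [mem_cylFun]
    rw [this]
    refine MeasurableSet.iInter fun i => MeasurableSet.iInter fun _ => ?_
    have hle : MeasurableSpace.comap (fun ω : ℤ → Z => ω (a + i)) inferInstance
        ≤ coordFromSA Z a :=
      le_iSup₂ (f := fun (m : ℤ) (_ : a ≤ m) =>
        MeasurableSpace.comap (fun ω : ℤ → Z => ω m) inferInstance) (a + i) (by omega)
    exact hle _ ⟨f i, hf i, rfl⟩

lemma coordFromSA_le_pi (a : ℤ) :
    coordFromSA Z a ≤ (inferInstance : MeasurableSpace (ℤ → Z)) :=
  iSup_le fun m => iSup_le fun _ => (measurable_pi_apply m).comap_le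

lemma coordFromSA_antitone {a b : ℤ} (hab : a ≤ b) : coordFromSA Z b ≤ coordFromSA Z a :=
  iSup_le fun m => iSup_le fun hbm =>
    le_iSup₂ (f := fun (m : ℤ) (_ : a ≤ m) =>
      MeasurableSpace.comap (fun ω : ℤ → Z => ω m) inferInstance) m (le_trans hab hbm)

lemma tail_subset_coord {A : Set (ℤ → Z)} (hA : MeasurableSet[tailSA Z] A) (a : ℤ) :
    MeasurableSet[coordFromSA Z a] A := by
  have h0 : MeasurableSet[coordFromSA Z (a.toNat : ℤ)] A := by
    have hle : tailSA Z ≤ coordFromSA Z (a.toNat : ℤ) := iInf_le _ a.toNat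
    exact hle _ hA
  exact coordFromSA_antitone (Int.self_le_toNat a) _ h0

lemma tail_measurableSet {A : Set (ℤ → Z)} (hA : MeasurableSet[tailSA Z] A) :
    MeasurableSet A :=
  coordFromSA_le_pi 0 _ (tail_subset_coord hA 0)

end St6

namespace St6

variable {Z : Type*} [MeasurableSpace Z] {κ : Kernel Z Z} [IsMarkovKernel κ]
variable {η : Measure Z} [IsProbabilityMeasure η] {P : Measure (ℤ → Z)}

/-- Two probability measures agreeing on all cylinders are equal. -/
lemma ext_cyl {μ ν : Measure (ℤ → Z)} [IsProbabilityMeasure μ] [IsProbabilityMeasure ν]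
    (h : ∀ (m : ℤ) (N : ℕ) (f : ℕ → Set Z), (∀ i, MeasurableSet (f i)) →
      μ (cylFun m N f) = ν (cylFun m N f)) : μ = ν := by
  refine ext_of_generate_finite (cylSets Z) generateFrom_cylSets isPiSystem_cylSets ?_ (by simp)
  rintro s ⟨m, N, f, hf, rfl⟩
  exact h m N f hf

/-- The shift `ω ↦ (n ↦ ω (n + k))`. -/
def shiftT (k : ℤ) : (ℤ → Z) → (ℤ → Z) := fun ω n => ω (n + k)

lemma measurable_shiftT (k : ℤ) : Measurable (shiftT (Z := Z) k) :=
  measurable_pi_lambda _ fun n => measurable_pi_apply (n + k)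

lemma shiftT_comp (a b : ℤ) : shiftT (Z := Z) a ∘ shiftT b = shiftT (a + b) := by
  funext ω n; simp [shiftT, add_assoc]

lemma shiftT_preimage_cylFun (k m : ℤ) (N : ℕ) (f : ℕ → Set Z) :
    shiftT k ⁻¹' cylFun m N f = cylFun (m + k) N f := by
  ext ω
  simp only [Set.mem_preimage, mem_cylFun, shiftT]
  constructor
  · intro h i hi; have := h i hi; rwa [show m + (i : ℤ) + k = m + k + i by ring] at this
  · intro h i hi
    rw [show m + (i : ℤ) + k = m + k + i by ring]
    exact h i hi

lemma shiftT_preimage_eval (k m : ℤ) (B : Set Z) :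
    shiftT k ⁻¹' ((fun ω : ℤ → Z => ω m) ⁻¹' B) = (fun ω : ℤ → Z => ω (m + k)) ⁻¹' B := rfl

lemma P_shift_invariant (hP : IsTrajMeasure η κ P) [IsProbabilityMeasure P] (k : ℤ) :
    P.map (shiftT k) = P := by
  have : IsProbabilityMeasure (P.map (shiftT (Z := Z) k)) :=
    Measure.isProbabilityMeasure_map (measurable_shiftT k).aemeasurable
  refine ext_cyl fun m N f hf => ?_
  rw [Measure.map_apply (measurable_shiftT k) (measurableSet_cylFun m N hf),
    shiftT_preimage_cylFun, P_cylFun hP _ N f hf, P_cylFun hP _ N f hf]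

lemma P_eval_law (hP : IsTrajMeasure η κ P) (m : ℤ) {B : Set Z} (hB : MeasurableSet B) :
    P ((fun ω : ℤ → Z => ω m) ⁻¹' B) = η B := by
  rw [eval_preimage_eq_cylFun, P_cylFun hP m 0 _ (fun _ => hB)]
  simp [WH]

/-- a.e. equality w.r.t. `η` transfers to a.e. equality w.r.t. `κ z` for a.e. `z`. -/
lemma ae_kernel_of_ae (hinv : Kernel.Invariant κ η) {α : Type*} {f g : Z → α}
    (h : f =ᵐ[η] g) : ∀ᵐ z ∂η, f =ᵐ[κ z] g := by
  set s := toMeasurable η {x | f x ≠ g x} with hs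
  have hsm : MeasurableSet s := measurableSet_toMeasurable _ _
  have hs0 : η s = 0 := by
    rw [measure_toMeasurable]
    exact h
  have hker : ∫⁻ z, κ z s ∂η = 0 := by
    have := hinv
    rw [Kernel.Invariant] at this
    calc ∫⁻ z, κ z s ∂η = (η.bind κ) s := (Measure.bind_apply hsm (Kernel.measurable κ).aemeasurable).symm
      _ = η s := by rw [this]
      _ = 0 := hs0
  have hz : ∀ᵐ z ∂η, κ z s = 0 :=
    (lintegral_eq_zero_iff (Kernel.measurable_coe κ hsm)).mp hker
  filter_upwards [hz] with z hz0
  exact measure_mono_null (subset_toMeasurable _ _) hz0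

lemma Rop_ae (hinv : Kernel.Invariant κ η) {g g' : Z → ℝ≥0∞} (h : g =ᵐ[η] g') :
    Rop κ g =ᵐ[η] Rop κ g' := by
  filter_upwards [ae_kernel_of_ae hinv h] with z hz
  exact lintegral_congr_ae hz

lemma WH_ae (hinv : Kernel.Invariant κ η) : ∀ (N : ℕ) (f : ℕ → Set Z) (g g' : Z → ℝ≥0∞),
    (∀ i, MeasurableSet (f i)) → Measurable g → Measurable g' → g =ᵐ[η] g' →
    WH κ N f g =ᵐ[η] WH κ N f g'
  | 0, f, g, g', _, _, _, h => h
  | N + 1, f, g, g', hf, hg, hg', h => by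
    have ih := WH_ae hinv N (fun i => f (i + 1)) g g' (fun i => hf _) hg hg' h
    filter_upwards [ae_kernel_of_ae hinv ih] with z hz
    exact lintegral_congr_ae (ae_restrict_of_ae hz)

/-- concatenation lemma -/
lemma WH_concat : ∀ (N : ℕ) (f : ℕ → Set Z) (M : ℕ) (g : ℕ → Set Z),
    (∀ i, MeasurableSet (g i)) →
    WH κ (N + 1 + M) (fun i => if i ≤ N then f i else g (i - (N + 1))) (fun _ => 1) =
      WH κ N f (Rop κ ((g 0).indicator (WH κ M g (fun _ => 1))))
  | 0, f, M, g, hg => by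
    have h1 : (0 : ℕ) + 1 + M = M + 1 := by omega
    rw [h1]
    show (fun z => ∫⁻ y in (if 1 ≤ 0 then f 1 else g (1 - (0+1))), WH κ M
      (fun i => if i + 1 ≤ 0 then f (i+1) else g (i + 1 - (0+1))) (fun _ => 1) y ∂(κ z)) = _
    have h2 : (if 1 ≤ 0 then f 1 else g (1 - (0+1))) = g 0 := by norm_num
    have h3 : (fun i => if i + 1 ≤ 0 then f (i+1) else g (i + 1 - (0+1))) = g := by
      funext i; simp
    rw [h2, h3]
    funext z
    show ∫⁻ y in g 0, WH κ M g (fun _ => 1) y ∂(κ z) = Rop κ _ z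
    rw [Rop, lintegral_indicator (hg 0)]
  | N + 1, f, M, g, hg => by
    have h1 : N + 1 + 1 + M = (N + 1 + M) + 1 := by omega
    rw [h1]
    show (fun z => ∫⁻ y in (if 1 ≤ N + 1 then f 1 else g (1 - (N+1+1))),
      WH κ (N + 1 + M) (fun i => if i + 1 ≤ N + 1 then f (i+1) else g (i + 1 - (N+1+1)))
        (fun _ => 1) y ∂(κ z)) = _
    have h2 : (if 1 ≤ N + 1 then f 1 else g (1 - (N+1+1))) = f 1 := by simp
    have h3 : (fun i => if i + 1 ≤ N + 1 then f (i+1) else g (i + 1 - (N+1+1))) =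
        (fun i => if i ≤ N then (fun j => f (j + 1)) i else g (i - (N + 1))) := by
      funext i
      by_cases hc : i ≤ N
      · rw [if_pos (by omega), if_pos hc]
      · rw [if_neg (fun hcon => hc (by omega)), if_neg hc,
          show i + 1 - (N+1+1) = i - (N+1) by omega]
    rw [h2, h3, WH_concat N (fun j => f (j + 1)) M g hg]
    rfl

end St6

namespace St6

variable {Z : Type*} [MeasurableSpace Z] {κ : Kernel Z Z} [IsMarkovKernel κ]
variable {η : Measure Z} [IsProbabilityMeasure η] {P : Measure (ℤ → Z)}

lemma WH_zero : ∀ (N : ℕ) (f : ℕ → Set Z), WH κ N f (fun _ => 0) = fun _ => 0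
  | 0, f => rfl
  | N + 1, f => by
    show (fun z => ∫⁻ y in f 1, WH κ N (fun i => f (i + 1)) (fun _ => 0) y ∂(κ z)) = _
    rw [WH_zero N]
    simp

lemma Rop_one_sub {h : Z → ℝ≥0∞} (hh : Measurable h) (hh1 : ∀ z, h z ≤ 1) :
    Rop κ (fun z => 1 - h z) = fun z => 1 - Rop κ h z := by
  funext z
  show ∫⁻ y, 1 - h y ∂(κ z) = 1 - ∫⁻ y, h y ∂(κ z)
  rw [lintegral_sub hh (by
      refine ne_top_of_le_ne_top one_ne_top ?_
      calc ∫⁻ y, h y ∂(κ z) ≤ ∫⁻ _, 1 ∂(κ z) := lintegral_mono hh1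
        _ = 1 := by rw [lintegral_one, measure_univ])
    (ae_of_all _ hh1)]
  rw [lintegral_one, measure_univ]

/-- The key Markov-property Dynkin argument. -/
lemma markov_prop (hP : IsTrajMeasure η κ P) (hinv : Kernel.Invariant κ η)
    [IsProbabilityMeasure P] (a : ℤ) :
    ∀ ⦃A' : Set (ℤ → Z)⦄, MeasurableSet[coordFromSA Z (a + 1)] A' →
    ∃ h : Z → ℝ≥0∞, Measurable h ∧ (∀ z, h z ≤ 1) ∧
      (∀ B : Set Z, MeasurableSet B →
        P (A' ∩ (fun ω : ℤ → Z => ω (a + 1)) ⁻¹' B) = ∫⁻ z in B, h z ∂η) ∧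
      (∀ (N : ℕ) (f : ℕ → Set Z), (∀ i, MeasurableSet (f i)) →
        P (A' ∩ cylFun (a - N) N f) = ∫⁻ z in f 0, WH κ N f (Rop κ h) z ∂η) := by
  refine @MeasurableSpace.induction_on_inter (ℤ → Z) (coordFromSA Z (a + 1)) _
    (cylSetsFrom Z (a + 1)) (generateFrom_cylSetsFrom (a + 1))
    (isPiSystem_cylSetsFrom (a + 1)) ?_ ?_ ?_ ?_
  · -- empty set
    refine ⟨fun _ => 0, measurable_const, fun z => zero_le_one, fun B hB => by simp,
      fun N f hf => ?_⟩
    have : Rop κ (fun _ => (0 : ℝ≥0∞)) = fun _ => 0 := Rop_const 0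
    rw [Set.empty_inter, this, WH_zero]
    simp
  · -- generator: cylinders based at a + 1
    rintro s ⟨M, g, hg, rfl⟩
    set W := WH κ M g (fun _ => 1) with hW
    have hWm : Measurable W := measurable_WH M g _ hg measurable_const
    have hW1 : ∀ z, W z ≤ 1 := WH_le_one M g _ (fun _ => le_rfl)
    refine ⟨(g 0).indicator W, hWm.indicator (hg 0),
      fun z => le_trans (Set.indicator_le_self _ _ z) (hW1 z), ?_, ?_⟩
    · intro B hB
      have hset : cylFun (a + 1) M g ∩ (fun ω : ℤ → Z => ω (a + 1)) ⁻¹' B =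
          cylFun (a + 1) M (Function.update g 0 (g 0 ∩ B)) := by
        ext ω
        simp only [Set.mem_inter_iff, mem_cylFun, Set.mem_preimage]
        constructor
        · rintro ⟨h1, h2⟩ i hi
          by_cases hc : i = 0
          · subst hc
            rw [Function.update_self]
            exact ⟨by simpa using h1 0 (Nat.zero_le _), by simpa using h2⟩
          · rw [Function.update_of_ne hc]
            exact h1 i hi
        · intro h
          constructor
          · intro i hi
            by_cases hc : i = 0
            · subst hc
              have := h 0 (Nat.zero_le _)
              rw [Function.update_self] at this
              exact this.1
            · have := h i hi
              rwa [Function.update_of_ne hc] at this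
          · have := h 0 (Nat.zero_le _)
            rw [Function.update_self] at this
            simpa using this.2
      have hg' : ∀ i, MeasurableSet (Function.update g 0 (g 0 ∩ B) i) := by
        intro i
        by_cases hc : i = 0
        · subst hc; rw [Function.update_self]; exact (hg 0).inter hB
        · rw [Function.update_of_ne hc]; exact hg i
      rw [hset, P_cylFun hP _ M _ hg']
      rw [WH_congr M (Function.update g 0 (g 0 ∩ B)) g (fun _ => 1)
        (fun i hi => Function.update_of_ne (by omega) _ _)]
      rw [Function.update_self]
      rw [← lintegral_indicator ((hg 0).inter hB), ← lintegral_indicator hB,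
        Set.indicator_indicator, Set.inter_comm B (g 0)]
    · intro N f hf
      have hset : cylFun (a + 1) M g ∩ cylFun (a - N) N f =
          cylFun (a - N) (N + 1 + M) (fun i => if i ≤ N then f i else g (i - (N + 1))) := by
        ext ω
        simp only [Set.mem_inter_iff, mem_cylFun]
        constructor
        · rintro ⟨h1, h2⟩ i hi
          by_cases hc : i ≤ N
          · rw [if_pos hc]; exact h2 i hc
          · rw [if_neg hc]
            have := h1 (i - (N + 1)) (by omega)
            rwa [show a + 1 + ((i - (N + 1) : ℕ) : ℤ) = a - N + (i : ℕ) by omega] at this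
        · intro h
          constructor
          · intro j hj
            have := h (N + 1 + j) (by omega)
            rw [if_neg (by omega), show N + 1 + j - (N + 1) = j by omega,
              show a - N + ((N + 1 + j : ℕ) : ℤ) = a + 1 + (j : ℕ) by push_cast; ring] at this
            exact this
          · intro i hi
            have := h i (by omega)
            rwa [if_pos hi] at this
      have hfc : ∀ i, MeasurableSet ((fun i => if i ≤ N then f i else g (i - (N + 1))) i) := by
        intro i
        by_cases hc : i ≤ N
        · simpa [hc] using hf i
        · simpa [hc] using hg _
      rw [hset, P_cylFun hP _ _ _ hfc, WH_concat N f M g hg]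
      have h0 : (if 0 ≤ N then f 0 else g (0 - (N + 1))) = f 0 := if_pos (Nat.zero_le N)
      rw [h0, ← hW]
  · -- complement
    rintro t htm ⟨h, hh, hh1, hrep, hcyl⟩
    have htamb : MeasurableSet t := coordFromSA_le_pi (a + 1) _ htm
    refine ⟨fun z => 1 - h z, measurable_const.sub hh, fun z => tsub_le_self, ?_, ?_⟩
    · intro B hB
      have hXm : MeasurableSet ((fun ω : ℤ → Z => ω (a + 1)) ⁻¹' B) :=
        (measurable_pi_apply _) hB
      have hdiff : tᶜ ∩ (fun ω : ℤ → Z => ω (a + 1)) ⁻¹' B =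
          ((fun ω : ℤ → Z => ω (a + 1)) ⁻¹' B) \ (t ∩ (fun ω : ℤ → Z => ω (a + 1)) ⁻¹' B) := by
        ext ω; simp only [Set.mem_inter_iff, Set.mem_compl_iff, Set.mem_diff]; tauto
      rw [hdiff, measure_diff Set.inter_subset_right
        ((htamb.inter hXm)).nullMeasurableSet (measure_ne_top P _),
        P_eval_law hP (a + 1) hB, hrep B hB]
      rw [lintegral_sub hh (ne_top_of_le_ne_top one_ne_top (setLIntegral_le_one hh1 B η)) 
        (ae_of_all _ hh1), setLIntegral_one]
    · intro N f hf
      have hcylm : MeasurableSet (cylFun (a - N) N f) := measurableSet_cylFun _ N hf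
      have hdiff : tᶜ ∩ cylFun (a - N) N f =
          cylFun (a - N) N f \ (t ∩ cylFun (a - N) N f) := by
        ext ω; simp only [Set.mem_inter_iff, Set.mem_compl_iff, Set.mem_diff]; tauto
      rw [hdiff, measure_diff Set.inter_subset_right
        ((htamb.inter hcylm)).nullMeasurableSet (measure_ne_top P _),
        P_cylFun hP _ N f hf, hcyl N f hf]
      rw [Rop_one_sub hh hh1, WH_sub_one N f (Rop κ h) hf (measurable_Rop hh) (Rop_le_one hh1)]
      rw [lintegral_sub (measurable_WH N f _ hf (measurable_Rop hh))
        (ne_top_of_le_ne_top one_ne_top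
          (setLIntegral_le_one (WH_le_one N f _ (Rop_le_one hh1)) _ η))
        (ae_of_all _ (WH_mono N f _ _ (fun z => Rop_le_one hh1 z)))]
  · -- countable disjoint union
    intro t hdis htm hC
    choose h hh hh1 hrep hcyl using hC
    have htamb : ∀ n, MeasurableSet (t n) := fun n => coordFromSA_le_pi (a + 1) _ (htm n)
    set S : Z → ℝ≥0∞ := fun z => ∑' n, h n z with hS
    have hSm : Measurable S := Measurable.ennreal_tsum hh
    have hsum : ∀ (X : Set (ℤ → Z)), MeasurableSet X →
        P ((⋃ n, t n) ∩ X) = ∑' n, P (t n ∩ X) := by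
      intro X hX
      rw [Set.iUnion_inter]
      exact measure_iUnion
        (hdis.mono fun i j hij => hij.mono Set.inter_subset_left Set.inter_subset_left)
        (fun n => (htamb n).inter hX)
    have hrepS : ∀ B : Set Z, MeasurableSet B →
        P ((⋃ n, t n) ∩ (fun ω : ℤ → Z => ω (a + 1)) ⁻¹' B) = ∫⁻ z in B, S z ∂η := by
      intro B hB
      rw [hsum _ ((measurable_pi_apply _) hB)]
      have : ∫⁻ z in B, S z ∂η = ∑' n, ∫⁻ z in B, h n z ∂η := by
        simp only [hS]
        exact lintegral_tsum fun n => (hh n).aemeasurable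
      rw [this]
      exact tsum_congr fun n => hrep n B hB
    have hSle : S ≤ᵐ[η] fun _ => 1 := by
      refine ae_le_of_forall_setLIntegral_le_of_sigmaFinite hSm fun s hs _ => ?_
      rw [← hrepS s hs, setLIntegral_one]
      calc P ((⋃ n, t n) ∩ (fun ω : ℤ → Z => ω (a + 1)) ⁻¹' s)
          ≤ P ((fun ω : ℤ → Z => ω (a + 1)) ⁻¹' s) := measure_mono Set.inter_subset_right
        _ = η s := P_eval_law hP (a + 1) hs
    set h' : Z → ℝ≥0∞ := fun z => min (S z) 1 with hh'def
    have hh'm : Measurable h' := hSm.min measurable_const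
    have hh'ae : h' =ᵐ[η] S := by
      filter_upwards [hSle] with z hz
      exact min_eq_left hz
    refine ⟨h', hh'm, fun z => min_le_right _ _, ?_, ?_⟩
    · intro B hB
      rw [hrepS B hB]
      exact lintegral_congr_ae (ae_restrict_of_ae hh'ae.symm)
    · intro N f hf
      rw [hsum _ (measurableSet_cylFun _ N hf)]
      have step1 : ∑' n, P (t n ∩ cylFun (a - N) N f) =
          ∑' n, ∫⁻ z in f 0, WH κ N f (Rop κ (h n)) z ∂η :=
        tsum_congr fun n => hcyl n N f hf
      rw [step1, ← lintegral_tsum (fun n =>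
        (measurable_WH N f _ hf (measurable_Rop (hh n))).aemeasurable)]
      have hRopsum : Rop κ S = fun z => ∑' n, Rop κ (h n) z := by
        funext z
        simp only [hS, Rop]
        exact lintegral_tsum fun n => (hh n).aemeasurable
      have hWHsum : WH κ N f (Rop κ S) = fun z => ∑' n, WH κ N f (Rop κ (h n)) z := by
        rw [hRopsum, WH_tsum N f (fun n => Rop κ (h n)) hf (fun n => measurable_Rop (hh n))]
      rw [← hWHsum]
      refine lintegral_congr_ae (ae_restrict_of_ae ?_)
      exact WH_ae hinv N f _ _ hf (measurable_Rop hSm) (measurable_Rop hh'm)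
        (Rop_ae hinv hh'ae.symm)

end St6

namespace St6

variable {Z : Type*} [MeasurableSpace Z] {κ : Kernel Z Z} [IsMarkovKernel κ]
variable {η : Measure Z} [IsProbabilityMeasure η] {P : Measure (ℤ → Z)}

def RopPow (κ : Kernel Z Z) : ℕ → (Z → ℝ≥0∞) → Z → ℝ≥0∞
  | 0, g => g
  | j + 1, g => Rop κ (RopPow κ j g)

lemma measurable_RopPow {g : Z → ℝ≥0∞} (hg : Measurable g) :
    ∀ j, Measurable (RopPow κ j g)
  | 0 => hg
  | j + 1 => measurable_Rop (measurable_RopPow hg j)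

lemma RopPow_le_one {g : Z → ℝ≥0∞} (hg : ∀ z, g z ≤ 1) :
    ∀ j z, RopPow κ j g z ≤ 1
  | 0, z => hg z
  | j + 1, z => Rop_le_one (RopPow_le_one hg j) z

lemma RopPow_ae (hinv : Kernel.Invariant κ η) {g g' : Z → ℝ≥0∞} (h : g =ᵐ[η] g') :
    ∀ j, RopPow κ j g =ᵐ[η] RopPow κ j g'
  | 0 => h
  | j + 1 => Rop_ae hinv (RopPow_ae hinv h j)

lemma shift_coord {a k : ℤ} {A : Set (ℤ → Z)} (hA : MeasurableSet[coordFromSA Z a] A) :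
    MeasurableSet[coordFromSA Z (a + k)] (shiftT k ⁻¹' A) := by
  have hcomap : MeasurableSpace.comap (shiftT k) (coordFromSA Z a) ≤ coordFromSA Z (a + k) := by
    rw [coordFromSA, MeasurableSpace.comap_iSup]
    refine iSup_le fun m => ?_
    rw [MeasurableSpace.comap_iSup]
    refine iSup_le fun ham => ?_
    rw [MeasurableSpace.comap_comp]
    have heq : ((fun ω : ℤ → Z => ω m) ∘ shiftT k) = fun ω : ℤ → Z => ω (m + k) := rfl
    rw [heq]
    exact le_iSup₂ (f := fun (m' : ℤ) (_ : a + k ≤ m') =>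
      MeasurableSpace.comap (fun ω : ℤ → Z => ω m') inferInstance) (m + k) (by omega)
  exact hcomap _ ⟨A, hA, rfl⟩

lemma shift_tail {A : Set (ℤ → Z)} (hA : MeasurableSet[tailSA Z] A) (i : ℕ) :
    MeasurableSet[tailSA Z] (shiftT (i : ℤ) ⁻¹' A) := by
  rw [tailSA, MeasurableSpace.measurableSet_iInf]
  intro n
  have := shift_coord (k := (i : ℤ)) (tail_subset_coord hA ((n : ℤ) - i))
  rwa [show ((n : ℤ) - i + i) = (n : ℤ) by ring] at this

/-- If `g` is an a.e. fixed point of `RopPow k` then it is a.e. constant. -/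
lemma fix_const (hinv : Kernel.Invariant κ η) (Q : Lp ℝ 1 η →ₗ[ℝ] Lp ℝ 1 η)
    (hQrep : ∀ φ : Lp ℝ 1 η, (Q φ : Z → ℝ) =ᵐ[η] fun z => ∫ y, (φ : Z → ℝ) y ∂(κ z))
    (hfix : ∀ n : ℕ, 1 ≤ n → ∀ ψ : Lp ℝ 1 η, MemLp (ψ : Z → ℝ) 2 η →
      (Q ^ n) ψ = ψ → ∃ c : ℝ, ψ = c • oneL1 η)
    {k : ℕ} (hk : 1 ≤ k) {g : Z → ℝ≥0∞} (hgm : Measurable g) (hg1 : ∀ z, g z ≤ 1)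
    (hgfix : g =ᵐ[η] RopPow κ k g) : ∃ c : ℝ≥0∞, g =ᵐ[η] fun _ => c := by
  set ψ : Z → ℝ := fun z => (g z).toReal with hψ
  have hψm : Measurable ψ := hgm.ennreal_toReal
  have hbd : ∀ z, ‖ψ z‖ ≤ 1 := by
    intro z
    rw [Real.norm_eq_abs, abs_of_nonneg ENNReal.toReal_nonneg]
    have := ENNReal.toReal_mono one_ne_top (hg1 z)
    simpa using this
  have mem1 : MemLp ψ 1 η := MemLp.of_bound hψm.aestronglyMeasurable 1 (ae_of_all _ hbd)
  have mem2 : MemLp ψ 2 η := MemLp.of_bound hψm.aestronglyMeasurable 1 (ae_of_all _ hbd)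
  set φ : Lp ℝ 1 η := mem1.toLp ψ with hφ
  have hcoe : ∀ j : ℕ, ((Q ^ j) φ : Z → ℝ) =ᵐ[η] fun z => (RopPow κ j g z).toReal := by
    intro j
    induction j with
    | zero =>
      rw [pow_zero]
      exact (MemLp.coeFn_toLp mem1)
    | succ j ih =>
      have hstep : (Q ^ (j + 1)) φ = Q ((Q ^ j) φ) := by
        rw [pow_succ', Module.End.mul_apply]
      rw [hstep]
      refine (hQrep ((Q ^ j) φ)).trans ?_
      have h1 : (fun z => ∫ y, ((Q ^ j) φ : Z → ℝ) y ∂(κ z)) =ᵐ[η]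
          fun z => ∫ y, (RopPow κ j g y).toReal ∂(κ z) := by
        filter_upwards [ae_kernel_of_ae hinv ih] with z hz
        exact integral_congr_ae hz
      refine h1.trans ?_
      refine Eventually.of_forall fun z => ?_
      show ∫ y, (RopPow κ j g y).toReal ∂(κ z) = (RopPow κ (j + 1) g z).toReal
      rw [integral_toReal ((measurable_RopPow hgm j).aemeasurable) (ae_of_all _ fun y =>
        lt_of_le_of_lt (RopPow_le_one hg1 j y) one_lt_top)]
      rfl
  have hfixQ : (Q ^ k) φ = φ := by
    refine Lp.ext ?_
    refine (hcoe k).trans ?_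
    have h2 : (fun z => (RopPow κ k g z).toReal) =ᵐ[η] ψ := by
      filter_upwards [hgfix] with z hz
      rw [hψ, ← hz]
    exact h2.trans (MemLp.coeFn_toLp mem1).symm
  have mem2' : MemLp (φ : Z → ℝ) 2 η := (memLp_congr_ae (MemLp.coeFn_toLp mem1)).mpr mem2
  obtain ⟨c, hc⟩ := hfix k hk φ mem2' hfixQ
  have hψc : ψ =ᵐ[η] fun _ => c := by
    have h3 : (φ : Z → ℝ) =ᵐ[η] fun _ => c := by
      rw [hc]
      refine (Lp.coeFn_smul c (oneL1 η)).trans ?_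
      have h4 : (oneL1 η : Z → ℝ) =ᵐ[η] fun _ => (1 : ℝ) := MemLp.coeFn_toLp _
      filter_upwards [h4] with z hz
      simp [hz]
    exact (MemLp.coeFn_toLp mem1).symm.trans h3
  refine ⟨ENNReal.ofReal c, ?_⟩
  have hgr : ∀ z, g z = ENNReal.ofReal (ψ z) := fun z =>
    (ENNReal.ofReal_toReal (lt_of_le_of_lt (hg1 z) one_lt_top).ne).symm
  filter_upwards [hψc] with z hz
  rw [hgr z, hz]

end St6


open St6

/-- If the operator `Q` induced by the kernel has only constant `L²` fixed
points of all its powers, and the tail σ-algebra of the stationary trajectory measure contains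
only finitely many sets up to null sets, then the tail σ-algebra is trivial. -/
theorem statement6
    {Z : Type*} [MeasurableSpace Z] [StandardBorelSpace Z]
    (κ : Kernel Z Z) [IsMarkovKernel κ]
    (η : Measure Z) [IsProbabilityMeasure η] (hinv : Kernel.Invariant κ η)
    (Q : Lp ℝ 1 η →ₗ[ℝ] Lp ℝ 1 η)
    (hQrep : ∀ φ : Lp ℝ 1 η, (Q φ : Z → ℝ) =ᵐ[η] fun z => ∫ y, (φ : Z → ℝ) y ∂(κ z))
    (P : Measure (ℤ → Z)) [IsProbabilityMeasure P] (hP : IsTrajMeasure η κ P)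
    -- (i): for every n ≥ 1, L² solutions of Q^n ψ = ψ are a.e. constant
    (hfix : ∀ n : ℕ, 1 ≤ n → ∀ ψ : Lp ℝ 1 η, MemLp (ψ : Z → ℝ) 2 η →
      (Q ^ n) ψ = ψ → ∃ c : ℝ, ψ = c • oneL1 η)
    -- (ii): every infinite family of tail sets contains two sets differing by a ℙ-null set
    (hfin : ∀ f : ℕ → Set (ℤ → Z), (∀ i, MeasurableSet[tailSA Z] (f i)) →
      ∃ i j, i ≠ j ∧ P (symmDiff (f i) (f j)) = 0) :
    ∀ A : Set (ℤ → Z), MeasurableSet[tailSA Z] A → P A = 0 ∨ P A = 1 := by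

  intro A hA
  have hAamb : MeasurableSet A := tail_measurableSet hA
  obtain ⟨i, j, hij, hnull⟩ := hfin (fun i => shiftT (i : ℤ) ⁻¹' A) (fun i => shift_tail hA i)
  obtain ⟨p, q, hpq, hnull'⟩ : ∃ p q : ℕ, p < q ∧
      P (symmDiff (shiftT (p : ℤ) ⁻¹' A) (shiftT (q : ℤ) ⁻¹' A)) = 0 := by
    rcases lt_or_gt_of_ne hij with h | h
    · exact ⟨i, j, h, hnull⟩
    · exact ⟨j, i, h, by rwa [symmDiff_comm]⟩
  obtain ⟨k, hk1, hqkp⟩ : ∃ k : ℕ, 1 ≤ k ∧ q = k + p := ⟨q - p, by omega, by omega⟩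
  have hmeas_sd : MeasurableSet (symmDiff A (shiftT (k : ℤ) ⁻¹' A)) :=
    hAamb.symmDiff (measurable_shiftT _ hAamb)
  have hAk : P (symmDiff A (shiftT (k : ℤ) ⁻¹' A)) = 0 := by
    have hcomp : shiftT (Z := Z) ((q : ℕ) : ℤ) = shiftT (k : ℤ) ∘ shiftT (p : ℤ) := by
      rw [shiftT_comp, show ((k : ℕ) : ℤ) + ((p : ℕ) : ℤ) = ((q : ℕ) : ℤ) by omega]
    have hpre : shiftT ((q : ℕ) : ℤ) ⁻¹' A = shiftT (p : ℤ) ⁻¹' (shiftT (k : ℤ) ⁻¹' A) := by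
      rw [hcomp]; rfl
    have hsd : symmDiff (shiftT (p : ℤ) ⁻¹' A) (shiftT ((q : ℕ) : ℤ) ⁻¹' A)
        = shiftT (p : ℤ) ⁻¹' (symmDiff A (shiftT (k : ℤ) ⁻¹' A)) := by
      rw [hpre]
      simp only [Set.symmDiff_def, Set.sup_eq_union, Set.preimage_union, Set.preimage_diff]
    calc P (symmDiff A (shiftT (k : ℤ) ⁻¹' A))
        = (P.map (shiftT (p : ℤ))) (symmDiff A (shiftT (k : ℤ) ⁻¹' A)) := by
          rw [P_shift_invariant hP]
      _ = P (shiftT (p : ℤ) ⁻¹' (symmDiff A (shiftT (k : ℤ) ⁻¹' A))) :=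
          Measure.map_apply (measurable_shiftT _) hmeas_sd
      _ = P (symmDiff (shiftT (p : ℤ) ⁻¹' A) (shiftT ((q : ℕ) : ℤ) ⁻¹' A)) := by rw [hsd]
      _ = 0 := hnull'
  have hAe : A =ᵐ[P] shiftT (k : ℤ) ⁻¹' A := measure_symmDiff_eq_zero_iff.mp hAk
  -- marginals of P restricted to A
  set νA : ℤ → Measure Z := fun m => (P.restrict A).map (fun ω => ω m) with hνA
  have hνapply : ∀ (m : ℤ) (B : Set Z), MeasurableSet B →
      νA m B = P (A ∩ (fun ω : ℤ → Z => ω m) ⁻¹' B) := by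
    intro m B hB
    rw [hνA]
    rw [Measure.map_apply (measurable_pi_apply m) hB,
      Measure.restrict_apply ((measurable_pi_apply m) hB), Set.inter_comm]
  have hνle : ∀ (m : ℤ) (B : Set Z), MeasurableSet B → νA m B ≤ η B := by
    intro m B hB
    rw [hνapply m B hB, ← P_eval_law hP m hB]
    exact measure_mono Set.inter_subset_right
  have hac : ∀ m, (νA m) ≪ η := fun m => Measure.AbsolutelyContinuous.mk fun B hB h0 =>
    le_antisymm (le_trans (hνle m B hB) h0.le) zero_le
  have hfin' : ∀ m, IsFiniteMeasure (νA m) := by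
    intro m
    constructor
    rw [hνA, Measure.map_apply (measurable_pi_apply m) MeasurableSet.univ]
    exact measure_lt_top _ _
  set H : ℤ → Z → ℝ≥0∞ := fun m z => min ((νA m).rnDeriv η z) 1 with hH
  have hHm : ∀ m, Measurable (H m) := fun m =>
    (Measure.measurable_rnDeriv _ _).min measurable_const
  have hH1 : ∀ m z, H m z ≤ 1 := fun m z => min_le_right _ _
  have hrepH : ∀ (m : ℤ) (B : Set Z), MeasurableSet B →
      ∫⁻ z in B, H m z ∂η = νA m B := by
    intro m B hB
    haveI := hfin' m
    have hle : νA m ≤ η := Measure.le_iff.mpr (hνle m)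
    have h1 : (νA m).rnDeriv η ≤ᵐ[η] 1 := Measure.rnDeriv_le_one_of_le hle
    have h2 : H m =ᵐ[η] (νA m).rnDeriv η := by
      filter_upwards [h1] with z hz
      exact min_eq_left hz
    rw [lintegral_congr_ae (ae_restrict_of_ae h2)]
    exact Measure.setLIntegral_rnDeriv' (hac m) hB
  have hcylA : ∀ (m : ℤ) (N : ℕ) (f : ℕ → Set Z), (∀ i, MeasurableSet (f i)) →
      P (A ∩ cylFun (m - N) N f) = ∫⁻ z in f 0, WH κ N f (Rop κ (H (m + 1))) z ∂η := by
    intro m N f hf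
    obtain ⟨h, hh, hh1, hrep, hcyl⟩ := markov_prop hP hinv m (tail_subset_coord hA (m + 1))
    have hae : h =ᵐ[η] H (m + 1) := by
      refine ae_eq_of_forall_setLIntegral_eq_of_sigmaFinite hh (hHm (m + 1)) fun s hs _ => ?_
      rw [← hrep s hs, hrepH (m + 1) s hs, hνapply (m + 1) s hs]
    rw [hcyl N f hf]
    refine lintegral_congr_ae (ae_restrict_of_ae ?_)
    exact WH_ae hinv N f _ _ hf (measurable_Rop hh) (measurable_Rop (hHm _)) (Rop_ae hinv hae)
  have hchain : ∀ m : ℤ, H m =ᵐ[η] Rop κ (H (m + 1)) := by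
    intro m
    refine ae_eq_of_forall_setLIntegral_eq_of_sigmaFinite (hHm m)
      (measurable_Rop (hHm _)) fun B hB _ => ?_
    rw [hrepH m B hB, hνapply m B hB]
    have h3 := hcylA m 0 (fun _ => B) (fun _ => hB)
    rw [show ((m : ℤ) - ((0 : ℕ) : ℤ)) = m by simp] at h3
    rw [eval_preimage_eq_cylFun m B]
    exact h3
  have hνshift : ∀ m : ℤ, νA (m + k) = νA m := by
    intro m
    refine Measure.ext fun B hB => ?_
    rw [hνapply _ B hB, hνapply m B hB]
    have hXeq : (fun ω : ℤ → Z => ω (m + k)) ⁻¹' B =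
        shiftT (k : ℤ) ⁻¹' ((fun ω : ℤ → Z => ω m) ⁻¹' B) := rfl
    rw [hXeq]
    have h5 : P (A ∩ shiftT (k : ℤ) ⁻¹' ((fun ω : ℤ → Z => ω m) ⁻¹' B)) =
        P ((shiftT (k : ℤ) ⁻¹' A) ∩ shiftT (k : ℤ) ⁻¹' ((fun ω : ℤ → Z => ω m) ⁻¹' B)) :=
      measure_congr (ae_eq_set_inter hAe (ae_eq_refl _))
    rw [h5, ← Set.preimage_inter,
      ← Measure.map_apply (measurable_shiftT ((k : ℕ) : ℤ))
        (hAamb.inter ((measurable_pi_apply m) hB)),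
      P_shift_invariant hP]
  have hHshift : ∀ m : ℤ, H (m + k) = H m := by
    intro m
    simp only [hH]
    rw [hνshift m]
  have hchainIter : ∀ (j : ℕ) (m : ℤ), H m =ᵐ[η] RopPow κ j (H (m + j)) := by
    intro j
    induction j with
    | zero =>
      intro m
      rw [show (m + ((0 : ℕ) : ℤ)) = m by simp]
      exact Eventually.of_forall fun z => rfl
    | succ j ih =>
      intro m
      refine (hchain m).trans ?_
      refine (Rop_ae hinv (ih (m + 1))).trans ?_
      rw [show (m + 1 + (j : ℤ)) = m + (((j : ℕ) + 1 : ℕ) : ℤ) by push_cast; ring]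
      exact Eventually.of_forall fun z => rfl
  have hHfix : ∀ m : ℤ, H m =ᵐ[η] RopPow κ k (H m) := by
    intro m
    have h6 := hchainIter k m
    rwa [hHshift m] at h6
  have hHconst : ∀ m : ℤ, H m =ᵐ[η] fun _ => P A := by
    intro m
    obtain ⟨c, hc⟩ := fix_const hinv Q hQrep hfix hk1 (hHm m) (hH1 m) (hHfix m)
    have hint : ∫⁻ z, H m z ∂η = P A := by
      have h7 := hrepH m Set.univ MeasurableSet.univ
      rw [Measure.restrict_univ] at h7
      rw [h7, hνapply m Set.univ MeasurableSet.univ]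
      simp
    have hc' : c = P A := by
      rw [← hint, lintegral_congr_ae hc, lintegral_const, measure_univ, mul_one]
    rwa [hc'] at hc
  have hkey : P.restrict A = P A • P := by
    refine ext_of_generate_finite (cylSets Z) generateFrom_cylSets isPiSystem_cylSets ?_ ?_
    · rintro s ⟨mm, N, f, hf, rfl⟩
      rw [Measure.restrict_apply (measurableSet_cylFun mm N hf), Set.inter_comm]
      have h7 := hcylA (mm + N) N f hf
      rw [show (mm + (N : ℤ) - (N : ℤ)) = mm by ring] at h7
      rw [h7]
      have h8 : Rop κ (H (mm + N + 1)) =ᵐ[η] fun _ => P A := by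
        refine (Rop_ae hinv (hHconst (mm + N + 1))).trans ?_
        rw [Rop_const (κ := κ)]
      have h9 : ∫⁻ z in f 0, WH κ N f (Rop κ (H (mm + N + 1))) z ∂η
          = ∫⁻ z in f 0, WH κ N f (fun _ => P A) z ∂η :=
        lintegral_congr_ae (ae_restrict_of_ae (WH_ae hinv N f _ _ hf
          (measurable_Rop (hHm _)) measurable_const h8))
      rw [h9]
      have h10 : WH κ N f (fun _ => P A) = fun z => P A * WH κ N f (fun _ => 1) z := by
        have h11 := WH_const_mul (κ := κ) N f (fun _ => 1) hf measurable_const (P A)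
        simpa using h11
      simp only [h10]
      rw [lintegral_const_mul (P A) (measurable_WH N f _ hf measurable_const),
        ← P_cylFun hP mm N f hf, Measure.smul_apply, smul_eq_mul]
    · rw [Measure.restrict_apply_univ, Measure.smul_apply, smul_eq_mul, measure_univ, mul_one]
  have hPA : P A = P A * P A := by
    have h12 := congrArg (fun μ : Measure (ℤ → Z) => μ A) hkey
    simpa [Measure.restrict_apply hAamb, Set.inter_self, Measure.smul_apply, smul_eq_mul]
      using h12
  rcases eq_or_ne (P A) 0 with h0 | h0
  · exact Or.inl h0
  · right
    have hne : P A ≠ ⊤ := measure_ne_top P A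
    have hx : (P A).toReal = (P A).toReal * (P A).toReal := by
      rw [← ENNReal.toReal_mul, ← hPA]
    have hx0 : (P A).toReal ≠ 0 := ENNReal.toReal_ne_zero.mpr ⟨h0, hne⟩
    have hone : (1 : ℝ) = (P A).toReal :=
      mul_left_cancel₀ hx0 (by rw [mul_one]; exact hx)
    rw [← ENNReal.ofReal_toReal hne, ← hone]
    simp
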